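/- Let $G$ be a finite abelian group, let $H$ be a subgroup of $G$, let $\widehat{G}$ denote the group of characters of $G$ with values in $\mathbb{C}^\times$, let $\widehat{G}_H := \{\chi \in \widehat{G} \mid \chi(h) = 1 \text{ for all } h \in H\}$, and let $X \subseteq \widehat{G}$ be a complete set of representatives of the cosets of $\widehat{G}_H$ in $\widehat{G}$ (so $\widehat{G}$ is the disjoint union of the cosets $\chi\widehat{G}_H$ for $\chi \in X$). Then for any $x : G \to \mathbb{C}$, the group determinant satisfies $\Theta_G(x) = \prod_{\chi \in X} \Theta_{G/H}\big(y^{\chi}\big)$, where for each coset $C \in G/H$ one sets $y^{\chi}_{C} := \sum_{g \in C} \chi(g)\, x_g$. -/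

import Mathlib

open scoped Classical

/-- The group determinant of a finite group `G`: the determinant of the matrix whose
`(g, h)` entry is `x (g * h⁻¹)`. -/
noncomputable def groupDet (G : Type*) [Group G] [Fintype G] {R : Type*} [CommRing R]
    (x : G → R) : R :=
  Matrix.det (Matrix.of fun g h : G => x (g * h⁻¹))

lemma sum_char_eq_zero {G : Type*} [CommGroup G] [Fintype G] (φ : G →* ℂˣ) (h : φ ≠ 1) :
    ∑ g : G, (φ g : ℂ) = 0 := by
  obtain ⟨a, ha⟩ : ∃ a : G, φ a ≠ 1 := by
    by_contra hc
    push_neg at hc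
    exact h (MonoidHom.ext fun g => hc g)
  have key : (φ a : ℂ) * ∑ g : G, (φ g : ℂ) = ∑ g : G, (φ g : ℂ) := by
    rw [Finset.mul_sum]
    exact Fintype.sum_equiv (Equiv.mulLeft a) _ _ (fun g => by simp [mul_comm])
  have ha' : (φ a : ℂ) ≠ 1 := fun hh => ha (Units.ext hh)
  have := sub_eq_zero.mpr key
  rw [← sub_one_mul] at this
  rcases mul_eq_zero.mp this with h1 | h2
  · exact absurd (sub_eq_zero.mp h1) ha'
  · exact h2

lemma dedekind {G : Type*} [CommGroup G] [Fintype G] [Fintype (G →* ℂˣ)] (x : G → ℂ) :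
    groupDet G x = ∏ χ : G →* ℂˣ, ∑ g : G, (χ g : ℂ) * x g := by
  have hexp : NeZero (Monoid.exponent G) := ⟨Monoid.exponent_ne_zero_of_finite⟩
  obtain ⟨E⟩ := CommGroup.monoidHom_mulEquiv_of_hasEnoughRootsOfUnity G ℂ
  set e : (G →* ℂˣ) ≃ G := E.toEquiv with he
  set U : Matrix G G ℂ := Matrix.of fun g h : G => ((e.symm h) g : ℂ) with hU
  set W : Matrix G G ℂ := Matrix.of fun g h : G => (((e.symm g) h : ℂ))⁻¹ with hW
  set D : Matrix G G ℂ := Matrix.diagonal (fun h => ∑ k : G, (((e.symm h) k : ℂ))⁻¹ * x k) with hD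
  set M : Matrix G G ℂ := Matrix.of fun g h : G => x (g * h⁻¹) with hM
  have comm : M * U = U * D := by
    ext g h
    rw [Matrix.mul_apply, Matrix.mul_apply]
    have hrhs : ∑ k : G, U g k * D k h
        = ((e.symm h) g : ℂ) * ∑ k : G, (((e.symm h) k : ℂ))⁻¹ * x k := by
      rw [Finset.sum_eq_single h (fun b _ hb => by
        simp [hD, Matrix.diagonal_apply_ne _ hb]) (by simp)]
      simp [hU, hD]
    rw [hrhs, Finset.mul_sum]
    have hlhs : ∀ k : G, M g k * U k h = x (g * k⁻¹) * ((e.symm h) k : ℂ) := fun k => rfl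
    simp only [hlhs]
    refine Fintype.sum_equiv ((Equiv.inv G).trans (Equiv.mulRight g)) _ _ (fun k => ?_)
    simp only [Equiv.trans_apply, Equiv.inv_apply, Equiv.coe_mulRight]
    have h1 : (e.symm h) (k⁻¹ * g) = ((e.symm h) k)⁻¹ * (e.symm h) g := by
      rw [map_mul, map_inv]
    rw [mul_comm g k⁻¹, h1]
    push_cast [Units.val_inv_eq_inv_val]
    have hz : ((e.symm h) k : ℂ) ≠ 0 := Units.ne_zero _
    have hz2 : ((e.symm h) g : ℂ) ≠ 0 := Units.ne_zero _
    field_simp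
  have hWU : W * U = (Fintype.card G : ℂ) • (1 : Matrix G G ℂ) := by
    ext g h
    rw [Matrix.mul_apply]
    have : ∀ k : G, W g k * U k h = (((e.symm g)⁻¹ * (e.symm h)) k : ℂ) := by
      intro k
      simp [hW, hU, Units.val_inv_eq_inv_val]
    simp only [this]
    by_cases hgh : g = h
    · subst hgh
      simp [Matrix.one_apply]
    · have hne : (e.symm g)⁻¹ * (e.symm h) ≠ 1 := by
        intro hc
        exact hgh (e.symm.injective (inv_mul_eq_one.mp hc))
      rw [sum_char_eq_zero _ hne]
      simp [Matrix.one_apply, hgh]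
  have hdetU : U.det ≠ 0 := by
    intro hc
    have : (W * U).det = 0 := by rw [Matrix.det_mul, hc, mul_zero]
    rw [hWU] at this
    simp only [Matrix.det_smul, Matrix.det_one, mul_one] at this
    have hcard : (Fintype.card G : ℂ) ≠ 0 := Nat.cast_ne_zero.mpr Fintype.card_ne_zero
    exact pow_ne_zero _ hcard this
  have hdet : M.det = D.det := by
    have := congrArg Matrix.det comm
    rw [Matrix.det_mul, Matrix.det_mul] at this
    rw [mul_comm U.det D.det] at this
    exact mul_right_cancel₀ hdetU this
  rw [groupDet, ← hM, hdet, hD, Matrix.det_diagonal]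
  refine Eq.symm (Fintype.prod_equiv ((Equiv.inv (G →* ℂˣ)).trans e) _ _ fun χ => ?_)
  simp [Equiv.trans_apply, Equiv.inv_apply, Units.val_inv_eq_inv_val]


/-- For a finite abelian group `G`, a subgroup `H`, and a complete set `X`
of representatives of the cosets of `Ĝ_H` in `Ĝ`, the group determinant factors as
`Θ_G(x) = ∏_{χ ∈ X} Θ_{G/H}(y^χ)` where `y^χ_C = ∑_{g ∈ C} χ(g) x_g`. -/
theorem groupDet_eq_prod_groupDet_quotient {G : Type*} [CommGroup G] [Fintype G]
    (H : Subgroup G) (X : Finset (G →* ℂˣ))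
    (hX : ∀ χ : G →* ℂˣ, ∃! ψ : G →* ℂˣ, ψ ∈ X ∧ ∀ h ∈ H, (ψ⁻¹ * χ) h = 1)
    (x : G → ℂ) :
    groupDet G x =
      ∏ χ ∈ X, groupDet (G ⧸ H) (fun C : G ⧸ H =>
        ∑ g ∈ Finset.univ.filter (fun g : G => (QuotientGroup.mk g : G ⧸ H) = C),
          (χ g : ℂ) * x g) := by
  letI : Fintype (G →* ℂˣ) := by
    have : NeZero (Monoid.exponent G) := ⟨Monoid.exponent_ne_zero_of_finite⟩
    exact Fintype.ofEquiv G
      (CommGroup.monoidHom_mulEquiv_of_hasEnoughRootsOfUnity G ℂ).some.toEquiv.symm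
  letI : Fintype ((G ⧸ H) →* ℂˣ) := by
    have : NeZero (Monoid.exponent (G ⧸ H)) := ⟨Monoid.exponent_ne_zero_of_finite⟩
    exact Fintype.ofEquiv (G ⧸ H)
      (CommGroup.monoidHom_mulEquiv_of_hasEnoughRootsOfUnity (G ⧸ H) ℂ).some.toEquiv.symm
  -- Notation
  set S : (G →* ℂˣ) → ℂ := fun θ => ∑ g : G, (θ g : ℂ) * x g with hS
  -- rewrite the RHS factors
  have hrhs : ∀ χ ∈ X,
      groupDet (G ⧸ H) (fun C : G ⧸ H =>
        ∑ g ∈ Finset.univ.filter (fun g : G => (QuotientGroup.mk g : G ⧸ H) = C),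
          (χ g : ℂ) * x g)
      = ∏ φ : (G ⧸ H) →* ℂˣ, S (χ * φ.comp (QuotientGroup.mk' H)) := by
    intro χ _
    rw [dedekind]
    refine Finset.prod_congr rfl fun φ _ => ?_
    rw [hS]
    simp only [MonoidHom.mul_apply, MonoidHom.comp_apply, QuotientGroup.mk'_apply,
      Units.val_mul]
    rw [← Finset.sum_fiberwise Finset.univ (fun g : G => (QuotientGroup.mk g : G ⧸ H))
      (fun g : G => (χ g : ℂ) * ((φ (QuotientGroup.mk g) : ℂ)) * x g)]
    refine Finset.sum_congr rfl fun C _ => ?_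
    rw [Finset.mul_sum]
    refine Finset.sum_congr rfl fun g hg => ?_
    have hgC : (QuotientGroup.mk g : G ⧸ H) = C := (Finset.mem_filter.mp hg).2
    rw [hgC]
    ring
  rw [Finset.prod_congr rfl hrhs, dedekind]
  rw [← Finset.prod_product' (s := X) (t := (Finset.univ : Finset ((G ⧸ H) →* ℂˣ)))
    (f := fun χ φ => S (χ * φ.comp (QuotientGroup.mk' H)))]
  refine Eq.symm (Finset.prod_bij
    (fun p _ => p.1 * p.2.comp (QuotientGroup.mk' H)) (fun p _ => Finset.mem_univ _)
    ?_ ?_ (fun p _ => rfl))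
  · -- injectivity
    rintro ⟨χ₁, φ₁⟩ hp₁ ⟨χ₂, φ₂⟩ hp₂ heq
    dsimp only at heq
    have hχ₁ : χ₁ ∈ X := (Finset.mem_product.mp hp₁).1
    have hχ₂ : χ₂ ∈ X := (Finset.mem_product.mp hp₂).1
    set θ : G →* ℂˣ := χ₁ * φ₁.comp (QuotientGroup.mk' H) with hθ
    have prop : ∀ (χ : G →* ℂˣ) (φ : (G ⧸ H) →* ℂˣ),
        χ * φ.comp (QuotientGroup.mk' H) = θ → ∀ h ∈ H, (χ⁻¹ * θ) h = 1 := by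
      intro χ φ hχφ h hh
      rw [← hχφ]
      simp only [MonoidHom.mul_apply, MonoidHom.inv_apply, MonoidHom.comp_apply,
        QuotientGroup.mk'_apply, (QuotientGroup.eq_one_iff h).mpr hh, map_one, mul_one,
        inv_mul_cancel]
    obtain ⟨ψ, -, huniq⟩ := hX θ
    have h1 : χ₁ = ψ := huniq χ₁ ⟨hχ₁, prop χ₁ φ₁ rfl⟩
    have h2 : χ₂ = ψ := huniq χ₂ ⟨hχ₂, prop χ₂ φ₂ heq.symm⟩
    have hχ : χ₁ = χ₂ := h1.trans h2.symm
    subst hχ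
    have hφpt : ∀ g : G, φ₁ (QuotientGroup.mk g) = φ₂ (QuotientGroup.mk g) := by
      intro g
      have := DFunLike.congr_fun heq g
      simp only [MonoidHom.mul_apply, MonoidHom.comp_apply, QuotientGroup.mk'_apply] at this
      exact mul_left_cancel this
    have : φ₁ = φ₂ := QuotientGroup.monoidHom_ext H (MonoidHom.ext fun g => hφpt g)
    rw [this]
  · -- surjectivity
    intro θ _
    obtain ⟨ψ, ⟨hmem, htriv⟩, -⟩ := hX θ
    refine ⟨(ψ, QuotientGroup.lift H (ψ⁻¹ * θ) (fun h hh => MonoidHom.mem_ker.mpr (htriv h hh))),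
      Finset.mem_product.mpr ⟨hmem, Finset.mem_univ _⟩, ?_⟩
    ext g
    simp only [MonoidHom.mul_apply, MonoidHom.comp_apply, QuotientGroup.mk'_apply,
      QuotientGroup.lift_mk', MonoidHom.inv_apply]
    group
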